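/- For every positive integer r there exist δ = δ(r) > 0 and n₀ = n₀(r) (and one may take δ = 1/2^{r+1}) with the following property: if A and B are sets of real numbers with |A| = |B| = n ≥ n₀ and |A + B| ≤ n^{1+δ}, then any r-coloring of A × B contains a monochromatic corner, i.e., three points (a,b), (a+d,b), (a,b+d) of the same color with a, a+d ∈ A, b, b+d ∈ B and d a positive real number. -/

import Mathlib

open Pointwise

private lemma theta_identity (k : ℕ) :
    2 * (1 - (1/2 : ℝ) ^ (k+2) - (1/4 : ℝ) ^ (k+1) / 2)
      = 1 + (1 - (1/2 : ℝ) ^ (k+1) - (1/4 : ℝ) ^ k / 2) + (1/4 : ℝ) ^ (k+1) := by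
  simp [pow_succ]; ring

private lemma theta_nonneg (k : ℕ) : 0 ≤ 1 - (1/2 : ℝ) ^ (k+1) - (1/4 : ℝ) ^ k / 2 := by
  have h2 : (1/4 : ℝ) ^ k ≤ 1 := pow_le_one₀ (by norm_num) (by norm_num)
  have h1 : (1/2 : ℝ) ^ (k+1) ≤ 1/2 := by
    have : (1/2:ℝ)^k ≤ 1 := pow_le_one₀ (by norm_num) (by norm_num)
    calc (1/2 : ℝ) ^ (k+1) = (1/2)^k * (1/2) := by ring
    _ ≤ 1/2 := by nlinarith
  nlinarith

set_option maxHeartbeats 2000000 in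
private lemma corner_key (r : ℕ) (χ : ℝ × ℝ → Fin r) :
    ∀ (k : ℕ) (C : Finset (Fin r)) (A B : Finset ℝ) (K : ℝ),
      C.card ≤ k →
      A.card = B.card →
      (∀ a ∈ A, ∀ b ∈ B, χ (a, b) ∈ C) →
      ((A + B).card : ℝ) ≤ K →
      (8 * k + 8 : ℝ) ≤ K ^ ((1/4 : ℝ) ^ k) →
      K ^ (1 - (1/2 : ℝ) ^ (k+1) - (1/4 : ℝ) ^ k / 2) ≤ (A.card : ℝ) →
      ∃ a b d : ℝ, a ∈ A ∧ b ∈ B ∧ a + d ∈ A ∧ b + d ∈ B ∧ 0 < d ∧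
        χ (a, b) = χ (a + d, b) ∧ χ (a, b) = χ (a, b + d) := by
  intro k
  induction k with
  | zero =>
      intro C A B K hC hAB hcol hsum hbig hm
      exfalso
      have he : (1 - (1/2 : ℝ) ^ (0+1) - (1/4 : ℝ) ^ 0 / 2) = 0 := by norm_num
      rw [he, Real.rpow_zero] at hm
      have hA : A.Nonempty := by
        rw [← Finset.card_pos]
        exact_mod_cast lt_of_lt_of_le zero_lt_one hm
      have hB : B.Nonempty := by rw [← Finset.card_pos, ← hAB, Finset.card_pos]; exact hA
      obtain ⟨a, ha⟩ := hA
      obtain ⟨b, hb⟩ := hB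
      have := hcol a ha b hb
      have hCe : C = ∅ := Finset.card_eq_zero.mp (Nat.le_zero.mp hC)
      simp [hCe] at this
  | succ k ih =>
      intro C A B K hC hAB hcol hsum hbig hm
      -- basic positivity facts
      have hK0 : (0:ℝ) ≤ K := le_trans (by positivity) hsum
      have hbig' : (8 * (k:ℝ) + 16 : ℝ) ≤ K ^ ((1/4 : ℝ) ^ (k+1)) := by push_cast at hbig ⊢; linarith
      have hK1 : (1:ℝ) ≤ K := by
        by_contra hcon
        push_neg at hcon
        have : K ^ ((1/4:ℝ) ^ (k+1)) ≤ 1 := Real.rpow_le_one hK0 hcon.le (by positivity)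
        nlinarith
      set θ : ℝ := 1 - (1/2 : ℝ) ^ (k+1) - (1/4 : ℝ) ^ k / 2 with hθdef
      set X : ℝ := K ^ θ with hXdef
      have hθ0 : 0 ≤ θ := theta_nonneg k
      have hX1 : (1:ℝ) ≤ X := by
        have := Real.rpow_le_rpow_of_exponent_le hK1 hθ0
        rwa [Real.rpow_zero] at this
      have hX0 : (0:ℝ) < X := lt_of_lt_of_le zero_lt_one hX1
      -- m ≥ 1
      have hm1 : 1 ≤ A.card := by
        have h1 : (1:ℝ) ≤ (A.card : ℝ) := by
          have := Real.rpow_le_rpow_of_exponent_le hK1 (theta_nonneg (k+1))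
          rw [Real.rpow_zero] at this
          exact le_trans this hm
        exact_mod_cast h1
      have hAne : A.Nonempty := Finset.card_pos.mp hm1
      have hBne : B.Nonempty := Finset.card_pos.mp (hAB ▸ hm1)
      -- key counting inequality : m^2 ≥ K * ((8k+16) * X)
      have hmsq : K * ((8 * (k:ℝ) + 16) * X) ≤ (A.card : ℝ) * (A.card : ℝ) := by
        have e1 : K ^ ((2:ℝ) * (1 - (1/2 : ℝ) ^ (k+1+1) - (1/4 : ℝ) ^ (k+1) / 2))
            = K ^ (1 - (1/2 : ℝ) ^ (k+1+1) - (1/4 : ℝ) ^ (k+1) / 2)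
              * K ^ (1 - (1/2 : ℝ) ^ (k+1+1) - (1/4 : ℝ) ^ (k+1) / 2) := by
          rw [two_mul, Real.rpow_add (lt_of_lt_of_le zero_lt_one hK1)]
        have e2 : (2:ℝ) * (1 - (1/2 : ℝ) ^ (k+1+1) - (1/4 : ℝ) ^ (k+1) / 2)
            = 1 + θ + (1/4 : ℝ) ^ (k+1) := theta_identity k
        have e3 : K ^ ((1:ℝ) + θ + (1/4 : ℝ) ^ (k+1))
            = K * (X * K ^ ((1/4 : ℝ) ^ (k+1))) := by
          rw [Real.rpow_add (lt_of_lt_of_le zero_lt_one hK1),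
            Real.rpow_add (lt_of_lt_of_le zero_lt_one hK1), Real.rpow_one, hXdef, mul_assoc]
        have hKpow : K * ((8 * (k:ℝ) + 16) * X) ≤ K * (X * K ^ ((1/4 : ℝ) ^ (k+1))) := by
          have : (8 * (k:ℝ) + 16) * X ≤ X * K ^ ((1/4 : ℝ) ^ (k+1)) := by
            rw [mul_comm X]
            exact mul_le_mul_of_nonneg_right hbig' hX0.le
          exact mul_le_mul_of_nonneg_left this hK0
        calc K * ((8 * (k:ℝ) + 16) * X) ≤ K * (X * K ^ ((1/4 : ℝ) ^ (k+1))) := hKpow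
          _ = K ^ ((1:ℝ) + θ + (1/4 : ℝ) ^ (k+1)) := e3.symm
          _ = K ^ ((2:ℝ) * (1 - (1/2 : ℝ) ^ (k+1+1) - (1/4 : ℝ) ^ (k+1) / 2)) := by rw [e2]
          _ = K ^ (1 - (1/2 : ℝ) ^ (k+1+1) - (1/4 : ℝ) ^ (k+1) / 2)
              * K ^ (1 - (1/2 : ℝ) ^ (k+1+1) - (1/4 : ℝ) ^ (k+1) / 2) := e1
          _ ≤ (A.card : ℝ) * (A.card : ℝ) := by
              apply mul_le_mul hm hm (Real.rpow_nonneg hK0 _) (Nat.cast_nonneg _)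
      -- pigeonhole: a popular (antidiagonal, color) fiber
      have hCne : C.Nonempty := by
        obtain ⟨a, ha⟩ := hAne; obtain ⟨b, hb⟩ := hBne
        exact ⟨_, hcol a ha b hb⟩
      have hABne : (A + B).Nonempty := hAne.add hBne
      set t : Finset (ℝ × Fin r) := (A + B) ×ˢ C with htdef
      have htne : t.Nonempty := hABne.product hCne
      set f : ℝ × ℝ → ℝ × Fin r := fun p => (p.1 + p.2, χ p) with hfdef
      have hmaps : ∀ p ∈ A ×ˢ B, f p ∈ t := by
        intro p hp
        rw [Finset.mem_product] at hp
        exact Finset.mem_product.mpr ⟨Finset.add_mem_add hp.1 hp.2, hcol p.1 hp.1 p.2 hp.2⟩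
      set q : ℕ := A.card * B.card / t.card with hqdef
      have hn : t.card * q ≤ (A ×ˢ B).card := by
        rw [hqdef, Finset.card_product A B, Nat.mul_comm]
        exact Nat.div_mul_le_self _ _
      obtain ⟨y, hyt, hDcard⟩ := Finset.exists_le_card_fiber_of_mul_le_card_of_maps_to hmaps htne hn
      obtain ⟨σ, c⟩ := y
      have hcC : c ∈ C := (Finset.mem_product.mp hyt).2
      set D : Finset (ℝ × ℝ) := {x ∈ A ×ˢ B | f x = (σ, c)} with hDdef
      have htpos : 0 < t.card := Finset.card_pos.mpr htne
      -- lower bound on q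
      have hqlb : (8:ℝ) * X - 1 ≤ (q:ℝ) := by
        have h1 : A.card * B.card < (q + 1) * t.card := by
          have hdiv := Nat.div_add_mod (A.card * B.card) t.card
          have hmod := Nat.mod_lt (A.card * B.card) htpos
          calc A.card * B.card = t.card * q + A.card * B.card % t.card := by
                rw [hqdef]; omega
            _ < t.card * q + t.card := Nat.add_lt_add_left hmod _
            _ = (q + 1) * t.card := by ring
        have htK : (t.card : ℝ) ≤ K * ((k:ℝ)+1) := by
          rw [htdef, Finset.card_product]
          push_cast
          have h2 : ((A+B).card:ℝ) ≤ K := hsum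
          have h3 : (C.card:ℝ) ≤ (k:ℝ)+1 := by exact_mod_cast hC
          have h4 : (0:ℝ) ≤ ((A+B).card:ℝ) := by positivity
          have h5 : (0:ℝ) ≤ (C.card:ℝ) := by positivity
          nlinarith
        have h6 : K * ((8 * (k:ℝ) + 16) * X) < ((q:ℝ) + 1) * (K * ((k:ℝ)+1)) := by
          have h7 : (A.card * B.card : ℝ) < ((q:ℝ)+1) * (t.card : ℝ) := by exact_mod_cast h1
          have h8 : ((q:ℝ)+1) * (t.card:ℝ) ≤ ((q:ℝ)+1) * (K * ((k:ℝ)+1)) := by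
            apply mul_le_mul_of_nonneg_left htK (by positivity)
          have hABr : (B.card : ℝ) = (A.card : ℝ) := by exact_mod_cast hAB.symm
          push_cast at h7
          nlinarith
        -- cancel K and conclude
        have hKpos : (0:ℝ) < K := lt_of_lt_of_le zero_lt_one hK1
        have hq0 : (0:ℝ) ≤ (q:ℝ) := Nat.cast_nonneg _
        nlinarith [hX0, hKpos, hq0]
      -- pass to the first coordinates
      have hDmem : ∀ p ∈ D, p.2 = σ - p.1 ∧ p.1 ∈ A ∧ p.2 ∈ B ∧ χ p = c := by
        intro p hp
        rw [hDdef, Finset.mem_filter, Finset.mem_product] at hp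
        obtain ⟨⟨h1, h2⟩, h3⟩ := hp
        have h4 : p.1 + p.2 = σ := congrArg Prod.fst h3
        have h5 : χ p = c := congrArg Prod.snd h3
        exact ⟨by linarith, h1, h2, h5⟩
      set T : Finset ℝ := D.image Prod.fst with hTdef
      have hTcard : T.card = D.card := by
        apply Finset.card_image_of_injOn
        intro p hp p' hp' he
        have e1 := (hDmem p hp).1
        have e2 := (hDmem p' hp').1
        exact Prod.ext_iff.mpr ⟨he, by rw [e1, e2, he]⟩
      have hTmem : ∀ x ∈ T, x ∈ A ∧ σ - x ∈ B ∧ χ (x, σ - x) = c := by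
        intro x hx
        rw [hTdef, Finset.mem_image] at hx
        obtain ⟨p, hp, rfl⟩ := hx
        obtain ⟨e1, e2, e3, e4⟩ := hDmem p hp
        have hpe : p = (p.1, σ - p.1) := Prod.ext_iff.mpr ⟨rfl, e1⟩
        refine ⟨e2, ?_, ?_⟩
        · rw [← e1]; exact e3
        · rw [← hpe]; exact e4
      set s : ℕ := T.card with hsdef
      have hsX : (8:ℝ) * X - 1 ≤ (s:ℝ) := by
        have hqs : q ≤ s := by rw [hTcard]; exact hDcard
        calc (8:ℝ)*X - 1 ≤ (q:ℝ) := hqlb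
          _ ≤ (s:ℝ) := by exact_mod_cast hqs
      set h : ℕ := s / 2 with hhdef
      have h2h : 2 * h ≤ s := by omega
      have hh1 : (s:ℝ) - 1 ≤ 2 * (h:ℝ) := by
        have : s ≤ 2*h + 1 := by omega
        have := (Nat.cast_le (α := ℝ)).mpr this
        push_cast at this
        linarith
      have hhX : X ≤ (h:ℝ) := by nlinarith
      have hh1' : 1 ≤ h := by
        have : (1:ℝ) ≤ (h:ℝ) := by nlinarith
        exact_mod_cast this
      -- sort and split
      set l : List ℝ := T.sort (· ≤ ·) with hldef
      have hlen : l.length = s := Finset.length_sort _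
      have hlnd : l.Nodup := Finset.sort_nodup _ _
      have hlsorted : List.Pairwise (· < ·) l := (Finset.sortedLT_sort T).pairwise
      have hhs : h ≤ s - h := by omega
      set A₁ : Finset ℝ := (l.take h).toFinset with hA₁def
      set U : Finset ℝ := (l.drop (s - h)).toFinset with hUdef
      have hA₁card : A₁.card = h := by
        rw [hA₁def, List.toFinset_card_of_nodup ((List.take_sublist _ _).nodup hlnd)]
        rw [List.length_take, hlen]
        omega
      have hUcard : U.card = h := by
        rw [hUdef, List.toFinset_card_of_nodup ((List.drop_sublist _ _).nodup hlnd)]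
        rw [List.length_drop, hlen]
        omega
      have horder : ∀ x ∈ A₁, ∀ u ∈ U, x < u := by
        intro x hx u hu
        rw [hA₁def, List.mem_toFinset] at hx
        rw [hUdef, List.mem_toFinset] at hu
        have hx' : x ∈ l.take (s - h) := by
          have he : l.take h = (l.take (s-h)).take h := by
            rw [List.take_take, min_eq_left hhs]
          exact List.take_subset _ _ (he ▸ hx)
        have hps : List.Pairwise (· < ·) (l.take (s-h) ++ l.drop (s-h)) := by
          rw [List.take_append_drop]; exact hlsorted
        exact (List.pairwise_append.mp hps).2.2 x hx' u hu
      have hA₁T : A₁ ⊆ T := by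
        intro x hx
        rw [hA₁def, List.mem_toFinset] at hx
        have : x ∈ l := List.take_subset _ _ hx
        rwa [hldef, Finset.mem_sort] at this
      have hUT : U ⊆ T := by
        intro x hx
        rw [hUdef, List.mem_toFinset] at hx
        have : x ∈ l := List.drop_subset _ _ hx
        rwa [hldef, Finset.mem_sort] at this
      have hA₁A : A₁ ⊆ A := fun x hx => (hTmem x (hA₁T hx)).1
      set B₁ : Finset ℝ := U.image (fun u => σ - u) with hB₁def
      have hB₁card : B₁.card = h := by
        rw [hB₁def, Finset.card_image_of_injective _ sub_right_injective, hUcard]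
      have hB₁B : B₁ ⊆ B := by
        intro b hb
        rw [hB₁def, Finset.mem_image] at hb
        obtain ⟨u, hu, rfl⟩ := hb
        exact (hTmem u (hUT hu)).2.1
      by_cases Hc : ∃ a ∈ A₁, ∃ u ∈ U, χ (a, σ - u) = c
      · obtain ⟨a, ha, u, hu, hχ⟩ := Hc
        obtain ⟨haA, haB, haχ⟩ := hTmem a (hA₁T ha)
        obtain ⟨huA, huB, huχ⟩ := hTmem u (hUT hu)
        have hlt : a < u := horder a ha u hu
        refine ⟨a, σ - u, u - a, haA, huB, ?_, ?_, by linarith, ?_, ?_⟩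
        · rw [show a + (u - a) = u from by ring]; exact huA
        · rw [show σ - u + (u - a) = σ - a from by ring]; exact haB
        · rw [show a + (u - a) = u from by ring, hχ, huχ]
        · rw [show σ - u + (u - a) = σ - a from by ring, hχ, haχ]
      · push_neg at Hc
        have hC' : (C.erase c).card ≤ k := by
          rw [Finset.card_erase_of_mem hcC]; omega
        have hcards' : A₁.card = B₁.card := by rw [hA₁card, hB₁card]
        have hcol' : ∀ a ∈ A₁, ∀ b ∈ B₁, χ (a, b) ∈ C.erase c := by
          intro a ha b hb
          rw [hB₁def, Finset.mem_image] at hb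
          obtain ⟨u, hu, rfl⟩ := hb
          refine Finset.mem_erase.mpr ⟨Hc a ha u hu, ?_⟩
          exact hcol a (hA₁A ha) _ ((hTmem u (hUT hu)).2.1)
        have hsum' : ((A₁ + B₁).card : ℝ) ≤ K := by
          refine le_trans ?_ hsum
          exact_mod_cast Finset.card_le_card (Finset.add_subset_add hA₁A hB₁B)
        have hbig'' : (8 * (k:ℝ) + 8 : ℝ) ≤ K ^ ((1/4 : ℝ) ^ k) := by
          have hexp : ((1/4:ℝ))^(k+1) ≤ (1/4:ℝ)^k := by
            have h9 : (0:ℝ) ≤ (1/4:ℝ)^k := by positivity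
            calc ((1/4:ℝ))^(k+1) = (1/4:ℝ)^k * (1/4) := by ring
              _ ≤ (1/4:ℝ)^k := by nlinarith
          have := Real.rpow_le_rpow_of_exponent_le hK1 hexp
          linarith
        have hm' : K ^ (1 - (1/2 : ℝ) ^ (k+1) - (1/4 : ℝ) ^ k / 2) ≤ (A₁.card : ℝ) := by
          rw [hA₁card]
          exact hhX
        obtain ⟨a, b, d, h1, h2, h3, h4, h5, h6, h7⟩ :=
          ih (C.erase c) A₁ B₁ K hC' hcards' hcol' hsum' hbig'' hm'
        exact ⟨a, b, d, hA₁A h1, hB₁B h2, hA₁A h3, hB₁B h4, h5, h6, h7⟩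

/-- For every positive `r` there are `δ = δ(r) > 0` and `n₀ = n₀(r)` (one may take
`δ = 1 / 2 ^ (r + 1)`) such that: if `A, B` are sets of reals with
`|A| = |B| = n ≥ n₀` and `|A + B| ≤ n ^ (1 + δ)`, then any `r`-coloring of `A × B`
contains a monochromatic corner `(a, b)`, `(a + d, b)`, `(a, b + d)` with `d > 0`. -/
theorem monochromatic_corner_of_small_sumset :
    ∀ r : ℕ, 0 < r → ∃ δ : ℝ, 0 < δ ∧ δ = 1 / 2 ^ (r + 1) ∧ ∃ n₀ : ℕ,
      ∀ (n : ℕ) (A B : Finset ℝ), A.card = n → B.card = n → n₀ ≤ n →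
        ((A + B).card : ℝ) ≤ (n : ℝ) ^ ((1 : ℝ) + δ) →
        ∀ χ : ℝ × ℝ → Fin r, ∃ a b d : ℝ,
          a ∈ A ∧ b ∈ B ∧ a + d ∈ A ∧ b + d ∈ B ∧ 0 < d ∧
          χ (a, b) = χ (a + d, b) ∧ χ (a, b) = χ (a, b + d) := by
  intro r hr
  refine ⟨1 / 2 ^ (r + 1), by positivity, rfl, ?_⟩
  refine ⟨max 2 ⌈(8 * (r:ℝ) + 8) ^ (4 ^ r : ℕ)⌉₊, ?_⟩
  intro n A B hA hB hn hsum χ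
  have hn2 : 2 ≤ n := le_trans (le_max_left _ _) hn
  have hnR : (1:ℝ) ≤ (n:ℝ) := by
    have : (1:ℕ) ≤ n := by omega
    exact_mod_cast this
  have hb : ((8 * (r:ℝ) + 8) ^ (4 ^ r : ℕ) : ℝ) ≤ (n:ℝ) := by
    have h2 : ⌈(8 * (r:ℝ) + 8) ^ (4 ^ r : ℕ)⌉₊ ≤ n := le_trans (le_max_right _ _) hn
    calc ((8 * (r:ℝ) + 8) ^ (4 ^ r : ℕ) : ℝ)
        ≤ (⌈(8 * (r:ℝ) + 8) ^ (4 ^ r : ℕ)⌉₊ : ℝ) := Nat.le_ceil _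
      _ ≤ (n:ℝ) := by exact_mod_cast h2
  set δ : ℝ := 1 / 2 ^ (r + 1) with hδdef
  set K : ℝ := (n:ℝ) ^ ((1:ℝ) + δ) with hKdef
  have hδ0 : 0 ≤ δ := by positivity
  have hKn : (n:ℝ) ≤ K := by
    calc (n:ℝ) = (n:ℝ) ^ (1:ℝ) := (Real.rpow_one _).symm
      _ ≤ K := Real.rpow_le_rpow_of_exponent_le hnR (by linarith)
  apply corner_key r χ r Finset.univ A B K
  · simp
  · rw [hA, hB]
  · intro a _ b _; exact Finset.mem_univ _
  · exact hsum
  · have h0 : (0:ℝ) ≤ 8 * (r:ℝ) + 8 := by positivity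
    have h1 : (((8 * (r:ℝ) + 8) ^ (4 ^ r : ℕ)) : ℝ) ^ ((1/4:ℝ)^r) ≤ K ^ ((1/4:ℝ)^r) :=
      Real.rpow_le_rpow (by positivity) (le_trans hb hKn) (by positivity)
    have h2 : (8 * (r:ℝ) + 8) = (((8 * (r:ℝ) + 8) ^ (4 ^ r : ℕ)) : ℝ) ^ ((1/4:ℝ)^r) := by
      rw [← Real.rpow_natCast (8 * (r:ℝ) + 8) (4 ^ r), ← Real.rpow_mul h0]
      have h3 : ((4 ^ r : ℕ) : ℝ) * (1/4:ℝ)^r = 1 := by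
        push_cast
        rw [← mul_pow]
        norm_num
      rw [h3, Real.rpow_one]
    rw [h2]
    exact h1
  · rw [hA]
    have hδeq : (1/2:ℝ)^(r+1) = δ := by rw [hδdef, div_pow, one_pow]
    have h4 : (0:ℝ) ≤ (1/4:ℝ)^r := by positivity
    have hexp : ((1:ℝ)+δ) * (1 - (1/2:ℝ)^(r+1) - (1/4:ℝ)^r/2) ≤ 1 := by
      rw [hδeq]
      nlinarith [sq_nonneg δ, hδ0, h4]
    calc K ^ (1 - (1/2:ℝ)^(r+1) - (1/4:ℝ)^r/2)
        = (n:ℝ) ^ (((1:ℝ)+δ) * (1 - (1/2:ℝ)^(r+1) - (1/4:ℝ)^r/2)) := by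
          rw [hKdef, ← Real.rpow_mul (by positivity)]
      _ ≤ (n:ℝ) ^ (1:ℝ) := Real.rpow_le_rpow_of_exponent_le hnR hexp
      _ = (n:ℝ) := Real.rpow_one _
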